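/- arXiv:1409.5023 — 2 statements merged into one kernel-verified Lean document; each statement's English description precedes it below -/
import Mathlib

section
/- Fix a real constant a with 0 < a < 1/4. On any open interval of v where −av² + v − 1 > 0 and −av − 2a + 1 ≠ 0 and 2av² − 2v + 2 ≠ 0, the function G(v) = (1/(2v))√(−av² + v − 1) − (1/v)·arctan(√(−av² + v − 1)) − (a/2)·arctan(2a√(−av² + v − 1)/(−av − 2a + 1)) + ((2a−1)/4)·arctan((v−2)√(−av² + v − 1)/(2av² − 2v + 2)) is an antiderivative of v ↦ (1/v²)·arctan(√(−av² + v − 1)). -/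
open Real

set_option maxHeartbeats 2000000 in
theorem antiderivative_inv_sq_arctan (a : ℝ) (ha0 : 0 < a) (ha1 : a < 1/4)
    (v : ℝ) (hpos : 0 < -a*v^2 + v - 1)
    (h1 : -a*v - 2*a + 1 ≠ 0) (h2 : 2*a*v^2 - 2*v + 2 ≠ 0) :
    HasDerivAt (fun v : ℝ =>
        (1/(2*v)) * Real.sqrt (-a*v^2 + v - 1)
        - (1/v) * arctan (Real.sqrt (-a*v^2 + v - 1))
        - a/2 * arctan (2*a * Real.sqrt (-a*v^2 + v - 1) / (-a*v - 2*a + 1))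
        + (2*a - 1)/4 *
            arctan ((v - 2) * Real.sqrt (-a*v^2 + v - 1) / (2*a*v^2 - 2*v + 2)))
      ((1/v^2) * arctan (Real.sqrt (-a*v^2 + v - 1))) v := by
  have hv1 : 1 < v := by nlinarith
  have hv : (0:ℝ) < v := by linarith
  set s := Real.sqrt (-a*v^2 + v - 1) with hs
  have hs2 : s^2 = -a*v^2 + v - 1 := Real.sq_sqrt hpos.le
  have hs0 : 0 < s := Real.sqrt_pos.mpr hpos
  -- inner function
  have hf : HasDerivAt (fun x : ℝ => -a*x^2 + x - 1) (-(a*(2*v)) + 1) v := by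
    have hA : HasDerivAt (fun x : ℝ => x^2) (2*v) v := by
      simpa using hasDerivAt_pow 2 v
    have := ((hA.const_mul a).neg.add (hasDerivAt_id' v)).sub_const 1
    convert this using 1
    · rfl
    · rfl
    · funext x; simp only [Pi.add_apply, Pi.neg_apply, Pi.sub_apply]; ring
  have hsf : HasDerivAt (fun x : ℝ => Real.sqrt (-a*x^2 + x - 1))
      ((-(a*(2*v)) + 1) / (2 * s)) v := hf.sqrt hpos.ne'
  -- term 1
  have hT1 : HasDerivAt (fun x : ℝ => (1/(2*x)) * Real.sqrt (-a*x^2 + x - 1))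
      ((0 * (2*v) - 1 * (2*1))/(2*v)^2 * s + (1/(2*v)) * ((-(a*(2*v)) + 1) / (2 * s))) v := by
    exact ((hasDerivAt_const v 1).div ((hasDerivAt_id' v).const_mul 2) (by positivity)).mul hsf
  -- term 2
  have hT2 : HasDerivAt (fun x : ℝ => (1/x) * arctan (Real.sqrt (-a*x^2 + x - 1)))
      ((0 * v - 1 * 1)/v^2 * arctan s + (1/v) * (1/(1 + s^2) * ((-(a*(2*v)) + 1) / (2 * s)))) v :=
    ((hasDerivAt_const v 1).div (hasDerivAt_id' v) hv.ne').mul hsf.arctan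
  -- term 3
  have hd : HasDerivAt (fun x : ℝ => -a*x - 2*a + 1) (-a) v := by
    have := (((hasDerivAt_id' v).const_mul a).neg.sub_const (2*a)).add_const 1
    convert this using 1
    · rfl
    · rfl
    · funext x; simp only [Pi.add_apply, Pi.neg_apply, Pi.sub_apply]; ring
    · ring
  have hT3 : HasDerivAt (fun x : ℝ => arctan (2*a * Real.sqrt (-a*x^2 + x - 1) / (-a*x - 2*a + 1)))
      (1 / (1 + (2*a*s/(-a*v-2*a+1))^2) *
        (((2*a) * ((-(a*(2*v)) + 1) / (2 * s)) * (-a*v-2*a+1) - 2*a*s * (-a)) / (-a*v-2*a+1)^2)) v :=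
    ((hsf.const_mul (2*a)).div hd h1).arctan
  -- term 4
  have he : HasDerivAt (fun x : ℝ => 2*a*x^2 - 2*x + 2) (2*a*(2*v) - 2) v := by
    have hA : HasDerivAt (fun x : ℝ => x^2) (2*v) v := by
      simpa using hasDerivAt_pow 2 v
    have := ((hA.const_mul (2*a)).sub ((hasDerivAt_id' v).const_mul 2)).add_const 2
    convert this using 1
    · rfl
    · rfl
    · funext x; rfl
    · ring
  have hT4 : HasDerivAt (fun x : ℝ => arctan ((x - 2) * Real.sqrt (-a*x^2 + x - 1) / (2*a*x^2 - 2*x + 2)))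
      (1 / (1 + ((v-2)*s/(2*a*v^2-2*v+2))^2) *
        (((1 * s + (v-2) * ((-(a*(2*v)) + 1) / (2 * s))) * (2*a*v^2-2*v+2)
          - (v-2)*s * (2*a*(2*v) - 2)) / (2*a*v^2-2*v+2)^2)) v :=
    ((((hasDerivAt_id' v).sub_const 2).mul hsf).div he h2).arctan
  have hav : (0:ℝ) < 1 - a*v := by nlinarith
  -- simplified term 3
  have hT3' : HasDerivAt (fun x : ℝ => arctan (2*a * Real.sqrt (-a*x^2 + x - 1) / (-a*x - 2*a + 1)))
      (a / ((1 - a*v) * s)) v := by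
    convert hT3 using 1
    have e2a : (-a*v-2*a+1)^2 + (2*a*s)^2 ≠ 0 := by positivity
    have expand : 1 + (2*a*s/(-a*v-2*a+1))^2 = ((-a*v-2*a+1)^2 + (2*a*s)^2) / (-a*v-2*a+1)^2 := by
      rw [add_div, div_self (pow_ne_zero 2 h1), div_pow]
    rw [expand, one_div_div, div_mul_div_comm,
      div_eq_div_iff (mul_ne_zero hav.ne' hs0.ne') (mul_ne_zero e2a (pow_ne_zero 2 h1))]
    field_simp
    linear_combination (a*(-v-2)+1)^2*(4*a^2 - 2*a*(1-a*v)) * hs2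
  -- simplified term 4
  have hT4' : HasDerivAt (fun x : ℝ => arctan ((x - 2) * Real.sqrt (-a*x^2 + x - 1) / (2*a*x^2 - 2*x + 2)))
      (-(1 / (v * s))) v := by
    convert hT4 using 1
    have h2' : v*(v*a-1)+1 ≠ 0 := fun h => h2 (by linear_combination 2*h)
    field_simp
    linear_combination (-(v-2)^2 - v*(2*(v*(v*a-1)+1) - 2*(v-2)*(2*a*v-1))) * hs2
  have H := ((hT1.sub hT2).sub (hT3'.const_mul (a/2))).add (hT4'.const_mul ((2*a-1)/4))
  convert H using 1
  · rfl
  · rfl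
  · funext x; rfl
  have e1 : (1:ℝ) + s^2 ≠ 0 := by positivity
  have hav' : 1 - v*a ≠ 0 := by rw [mul_comm]; exact hav.ne'
  field_simp
  linear_combination 8*((1-a*v)*s^2 + a*v) * hs2
end

section
/- For 1/4 < b < 1/2, with r₀ = (1 − 2b − b^{3/2})/(√b(1−b)), one has ∫_{r₀}^1 r·arccos((1 − 3b + b² − b(1−b)r²)/(2b²r)) dr = π(2b³ − 8b² + 6b − 1)/(4(b−1)²b) − (1/2)·arccos(−1 + (4b−1)/(2b²)) + ((1−2b)/(4b(1−b)))·√(4b−1) + ((1−2b)²/(2b(1−b)²))·arctan((1−3b)/((1−b)√(4b−1))). -/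
set_option maxHeartbeats 2000000

open Real intervalIntegral

lemma deriv_aux (A C D : ℝ) (hC : 0 < C) (hD : 0 < D) (hK : 0 < 4*A*C + D^2)
    (r : ℝ) (hr : 0 < r)
    (hQ : 0 < D^2*r^2 - (A - C*r^2)^2) :
    HasDerivAt (fun x : ℝ =>
      x^2/2 * arccos ((A - C*x^2)/(D*x))
      - (4*A*C + D^2)/(8*C^2) *
          arcsin ((2*C^2*x^2 - (2*A*C + D^2))/(D*Real.sqrt (4*A*C + D^2)))
      + Real.sqrt (D^2*x^2 - (A - C*x^2)^2)/(4*C))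
      (r * arccos ((A - C*r^2)/(D*r))) r := by
  have hr' : r ≠ 0 := hr.ne'
  have hDr : D * r ≠ 0 := by positivity
  set X := Real.sqrt (D^2*r^2 - (A - C*r^2)^2) with hXdef
  have hX0 : 0 < X := Real.sqrt_pos.2 hQ
  have hX2 : X^2 = D^2*r^2 - (A - C*r^2)^2 := Real.sq_sqrt hQ.le
  set sK := Real.sqrt (4*A*C + D^2) with hsKdef
  have hsK0 : 0 < sK := Real.sqrt_pos.2 hK
  have hsK2 : sK^2 = 4*A*C + D^2 := Real.sq_sqrt hK.le
  -- the inner function g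
  have hg : HasDerivAt (fun x : ℝ => (A - C*x^2)/(D*x))
      (-(A + C*r^2)/(D*r^2)) r := by
    have h1 : HasDerivAt (fun x : ℝ => A - C*x^2) (-(C*(2*r))) r := by
      simpa using ((hasDerivAt_pow 2 r).const_mul C).const_sub A
    have h2 : HasDerivAt (fun x : ℝ => D*x) D r := by
      simpa using (hasDerivAt_id r).const_mul D
    have := h1.div h2 hDr
    exact this.congr_deriv (by field_simp; ring)
  -- bounds on g
  have hgsq : ((A - C*r^2)/(D*r))^2 < 1 := by
    rw [div_pow, div_lt_one (by positivity)]
    nlinarith [hQ]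
  have hg1 : (A - C*r^2)/(D*r) ≠ -1 := by intro h; rw [h] at hgsq; norm_num at hgsq
  have hg2 : (A - C*r^2)/(D*r) ≠ 1 := by intro h; rw [h] at hgsq; norm_num at hgsq
  have e1 : Real.sqrt (1 - ((A - C*r^2)/(D*r))^2) = X/(D*r) := by
    rw [show 1 - ((A - C*r^2)/(D*r))^2 = (X/(D*r))^2 by
      field_simp
      linarith [hX2]]
    exact Real.sqrt_sq (by positivity)
  have harccos : HasDerivAt (fun x : ℝ => arccos ((A - C*x^2)/(D*x)))
      (-(1 / (X/(D*r))) * (-(A + C*r^2)/(D*r^2))) r := by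
    have := (Real.hasDerivAt_arccos hg1 hg2).comp r hg
    rwa [e1] at this
  have h1 : HasDerivAt (fun x : ℝ => x^2/2 * arccos ((A - C*x^2)/(D*x)))
      (r * arccos ((A - C*r^2)/(D*r))
        + r^2/2 * (-(1 / (X/(D*r))) * (-(A + C*r^2)/(D*r^2)))) r := by
    have hp : HasDerivAt (fun x : ℝ => x^2/2) r r := by
      simpa using (hasDerivAt_pow 2 r).div_const 2
    exact (hp.mul harccos).congr_deriv (by ring)
  -- the arcsin part
  have hs : HasDerivAt (fun x : ℝ => (2*C^2*x^2 - (2*A*C + D^2))/(D*sK))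
      (4*C^2*r/(D*sK)) r := by
    have : HasDerivAt (fun x : ℝ => 2*C^2*x^2 - (2*A*C + D^2)) (2*C^2*(2*r)) r := by
      simpa using ((hasDerivAt_pow 2 r).const_mul (2*C^2)).sub_const (2*A*C + D^2)
    have := this.div_const (D*sK)
    exact this.congr_deriv (by ring)
  have hssq : ((2*C^2*r^2 - (2*A*C + D^2))/(D*sK))^2 < 1 := by
    rw [div_pow, div_lt_one (by positivity)]
    have : (D*sK)^2 = D^2*(4*A*C + D^2) := by
      rw [mul_pow, hsK2]
    rw [this]
    have hid : D^2*(4*A*C + D^2) - (2*C^2*r^2 - (2*A*C + D^2))^2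
        = 4*C^2*(D^2*r^2 - (A - C*r^2)^2) := by ring
    nlinarith [mul_pos (mul_pos hC hC) hQ, hid]
  have hs1 : (2*C^2*r^2 - (2*A*C + D^2))/(D*sK) ≠ -1 := by
    intro h; rw [h] at hssq; norm_num at hssq
  have hs2 : (2*C^2*r^2 - (2*A*C + D^2))/(D*sK) ≠ 1 := by
    intro h; rw [h] at hssq; norm_num at hssq
  have e2 : Real.sqrt (1 - ((2*C^2*r^2 - (2*A*C + D^2))/(D*sK))^2) = 2*C*X/(D*sK) := by
    rw [show 1 - ((2*C^2*r^2 - (2*A*C + D^2))/(D*sK))^2 = (2*C*X/(D*sK))^2 by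
      field_simp
      nlinarith [hX2, hsK2]]
    exact Real.sqrt_sq (by positivity)
  have harcsin : HasDerivAt
      (fun x : ℝ => arcsin ((2*C^2*x^2 - (2*A*C + D^2))/(D*sK)))
      (1 / (2*C*X/(D*sK)) * (4*C^2*r/(D*sK))) r := by
    have := (Real.hasDerivAt_arcsin hs1 hs2).comp r hs
    rwa [e2] at this
  have h2 : HasDerivAt
      (fun x : ℝ => (4*A*C + D^2)/(8*C^2) *
        arcsin ((2*C^2*x^2 - (2*A*C + D^2))/(D*sK)))
      ((4*A*C + D^2)/(8*C^2) * (1 / (2*C*X/(D*sK)) * (4*C^2*r/(D*sK)))) r :=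
    harcsin.const_mul _
  -- the sqrt part
  have hQfun : HasDerivAt (fun x : ℝ => D^2*x^2 - (A - C*x^2)^2)
      (2*D^2*r + 2*(A - C*r^2)*(C*(2*r))) r := by
    have ha : HasDerivAt (fun x : ℝ => D^2*x^2) (D^2*(2*r)) r := by
      simpa using (hasDerivAt_pow 2 r).const_mul (D^2)
    have hb : HasDerivAt (fun x : ℝ => (A - C*x^2)^2)
        ((2:ℕ) * (A - C*r^2)^1 * (-(C*(2*r)))) r := by
      have h1 : HasDerivAt (fun x : ℝ => A - C*x^2) (-(C*(2*r))) r := by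
        simpa using ((hasDerivAt_pow 2 r).const_mul C).const_sub A
      exact h1.pow 2
    have := ha.sub hb
    exact this.congr_deriv (by push_cast; ring)
  have h3 : HasDerivAt (fun x : ℝ => Real.sqrt (D^2*x^2 - (A - C*x^2)^2)/(4*C))
      ((1/(2*X) * (2*D^2*r + 2*(A - C*r^2)*(C*(2*r))))/(4*C)) r := by
    have := ((Real.hasDerivAt_sqrt hQ.ne').comp r hQfun).div_const (4*C)
    simpa [hXdef] using this
  have := (h1.sub h2).add h3
  have hC' : C ≠ 0 := hC.ne'
  have hD' : D ≠ 0 := hD.ne'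
  exact this.congr_deriv (by field_simp; ring)


theorem integral_r_arccos (b : ℝ) (hb1 : 1/4 < b) (hb2 : b < 1/2)
    (hb3 : b < (3 - Real.sqrt 5)/2) :
    (∫ r in ((1 - 2*b - b ^ ((3:ℝ)/2)) / (Real.sqrt b * (1 - b)))..1,
        r * arccos ((1 - 3*b + b^2 - b*(1 - b)*r^2) / (2*b^2*r))) =
      π*(2*b^3 - 8*b^2 + 6*b - 1)/(4*(b - 1)^2*b)
      - 1/2 * arccos (-1 + (4*b - 1)/(2*b^2))
      + (1 - 2*b)/(4*b*(1 - b)) * Real.sqrt (4*b - 1)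
      + (1 - 2*b)^2/(2*b*(1 - b)^2)
          * arctan ((1 - 3*b)/((1 - b) * Real.sqrt (4*b - 1))) := by
  have hb0 : 0 < b := by linarith
  obtain ⟨t, ht0, rfl⟩ : ∃ t : ℝ, 0 < t ∧ b = t^2 :=
    ⟨Real.sqrt b, Real.sqrt_pos.2 hb0, (Real.sq_sqrt hb0.le).symm⟩
  have ht0' : t ≠ 0 := ht0.ne'
  have hthalf : 1/2 < t := by nlinarith
  have ht1 : t < 1 := by nlinarith
  have h1t2 : 0 < 1 - t^2 := by nlinarith
  have h1t2' : (1:ℝ) - t^2 ≠ 0 := h1t2.ne'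
  have h12t2 : 0 < 1 - 2*t^2 := by nlinarith
  have h4t1 : 0 < 4*t^2 - 1 := by nlinarith
  have h5 : Real.sqrt 5 ^ 2 = 5 := Real.sq_sqrt (by norm_num)
  have h5n : 0 ≤ Real.sqrt 5 := Real.sqrt_nonneg 5
  have hlt : t < (Real.sqrt 5 - 1)/2 := by
    nlinarith [sq_nonneg (2*t - (Real.sqrt 5 - 1))]
  have hgold : 0 < 1 - t - t^2 := by
    nlinarith [mul_pos (sub_pos.2 hlt)
      (show (0:ℝ) < (Real.sqrt 5 - 1)/2 + t + 1 by nlinarith)]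
  have hnum : 0 < 1 - 2*t^2 - t^3 := by
    nlinarith [mul_pos hgold (show (0:ℝ) < 1 + t by linarith)]
  have hpow : ((t^2 : ℝ)) ^ ((3:ℝ)/2) = t^3 := by
    have h1 : ((t^2 : ℝ)) ^ ((3:ℝ)/2) = (((t^2 : ℝ)) ^ ((1:ℝ)/2))^(3:ℕ) := by
      rw [← Real.rpow_natCast (((t^2 : ℝ)) ^ ((1:ℝ)/2)) 3, ← Real.rpow_mul (by positivity)]
      norm_num
    rw [h1, ← Real.sqrt_eq_rpow, Real.sqrt_sq ht0.le]
  rw [hpow, Real.sqrt_sq ht0.le]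
  set r₀ := (1 - 2*t^2 - t^3)/(t*(1 - t^2)) with hr₀def
  have hr0pos : 0 < r₀ := div_pos hnum (mul_pos ht0 h1t2)
  have hr01 : r₀ < 1 := by
    rw [hr₀def, div_lt_one (mul_pos ht0 h1t2)]; nlinarith
  set A := 1 - 3*t^2 + (t^2)^2 with hA
  set C := t^2*(1 - t^2) with hC
  set D := 2*(t^2)^2 with hD
  have hCpos : 0 < C := by rw [hC]; exact mul_pos (by positivity) h1t2
  have hDpos : 0 < D := by rw [hD]; positivity
  have hKval : 4*A*C + D^2 = (2*t*(1 - 2*t^2))^2 := by rw [hA, hC, hD]; ring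
  have hKpos : 0 < 4*A*C + D^2 := by
    rw [hKval]; exact pow_pos (mul_pos (by linarith) h12t2) 2
  have hsKval : Real.sqrt (4*A*C + D^2) = 2*t*(1 - 2*t^2) := by
    rw [hKval, Real.sqrt_sq (le_of_lt (mul_pos (by linarith) h12t2))]
  have hQ0 : D^2*r₀^2 - (A - C*r₀^2)^2 = 0 := by
    rw [hA, hC, hD, hr₀def]; field_simp; ring
  have hQ1pos : 0 < D^2*1^2 - (A - C*1^2)^2 := by
    have : D^2*1^2 - (A - C*1^2)^2 = (4*t^2 - 1)*(1 - 2*t^2)^2 := by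
      rw [hA, hC, hD]; ring
    rw [this]; exact mul_pos h4t1 (pow_pos h12t2 2)
  have hcontg : ContinuousOn (fun x : ℝ => (A - C*x^2)/(D*x)) (Set.Icc r₀ 1) := by
    apply ContinuousOn.div
    · exact (continuous_const.sub (continuous_const.mul (continuous_pow 2))).continuousOn
    · exact (continuous_const.mul continuous_id).continuousOn
    · intro x hx
      have hx0 : 0 < x := lt_of_lt_of_le hr0pos hx.1
      exact (mul_pos hDpos hx0).ne'
  have hcontF : ContinuousOn (fun x : ℝ =>
      x^2/2 * arccos ((A - C*x^2)/(D*x))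
      - (4*A*C + D^2)/(8*C^2) *
          arcsin ((2*C^2*x^2 - (2*A*C + D^2))/(D*Real.sqrt (4*A*C + D^2)))
      + Real.sqrt (D^2*x^2 - (A - C*x^2)^2)/(4*C)) (Set.Icc r₀ 1) := by
    apply ContinuousOn.add
    apply ContinuousOn.sub
    · exact (((continuous_pow 2).div_const 2).continuousOn).mul
        (Real.continuous_arccos.comp_continuousOn hcontg)
    · exact (continuous_const.mul (Real.continuous_arcsin.comp
        (((continuous_const.mul (continuous_pow 2)).sub continuous_const).div_const _))).continuousOn
    · exact ((Real.continuous_sqrt.comp ((continuous_const.mul (continuous_pow 2)).sub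
        ((continuous_const.sub (continuous_const.mul (continuous_pow 2))).pow 2))).div_const _).continuousOn
  have hderivF : ∀ x ∈ Set.Ioo r₀ 1, HasDerivWithinAt (fun x : ℝ =>
      x^2/2 * arccos ((A - C*x^2)/(D*x))
      - (4*A*C + D^2)/(8*C^2) *
          arcsin ((2*C^2*x^2 - (2*A*C + D^2))/(D*Real.sqrt (4*A*C + D^2)))
      + Real.sqrt (D^2*x^2 - (A - C*x^2)^2)/(4*C))
      (x * arccos ((A - C*x^2)/(D*x))) (Set.Ioi x) x := by
    intro x hx
    have hx0 : 0 < x := lt_trans hr0pos hx.1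
    have h1 : 0 < x^2 - r₀^2 := by nlinarith [hx.1]
    have h2 : 0 < 1 - x^2 := by nlinarith [hx.2]
    have h3 : 0 < 1 - r₀^2 := by nlinarith
    have hkey : (D^2*x^2 - (A - C*x^2)^2) * (1 - r₀^2)
        = (1 - x^2)*(D^2*r₀^2 - (A - C*r₀^2)^2)
          + (x^2 - r₀^2)*(D^2*1^2 - (A - C*1^2)^2)
          + C^2*(x^2 - r₀^2)*(1 - x^2)*(1 - r₀^2) := by ring
    rw [hQ0] at hkey
    have e1 : 0 < (x^2 - r₀^2)*(D^2*1^2 - (A - C*1^2)^2) := mul_pos h1 hQ1pos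
    have e2 : 0 < C^2*(x^2 - r₀^2)*(1 - x^2)*(1 - r₀^2) :=
      mul_pos (mul_pos (mul_pos (pow_pos hCpos 2) h1) h2) h3
    have hQx : 0 < D^2*x^2 - (A - C*x^2)^2 := by nlinarith [hkey, e1, e2, h3]
    exact (deriv_aux A C D hCpos hDpos hKpos x hx0 hQx).hasDerivWithinAt
  have hint : IntervalIntegrable (fun r : ℝ => r * arccos ((A - C*r^2)/(D*r)))
      MeasureTheory.volume r₀ 1 := by
    apply ContinuousOn.intervalIntegrable
    rw [Set.uIcc_of_le hr01.le]
    exact continuousOn_id.mul (Real.continuous_arccos.comp_continuousOn hcontg)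
  have key : (∫ r in r₀..1, r * arccos ((A - C*r^2)/(D*r)))
      = (1^2/2 * arccos ((A - C*1^2)/(D*1))
          - (4*A*C + D^2)/(8*C^2) *
              arcsin ((2*C^2*1^2 - (2*A*C + D^2))/(D*Real.sqrt (4*A*C + D^2)))
          + Real.sqrt (D^2*1^2 - (A - C*1^2)^2)/(4*C))
        - (r₀^2/2 * arccos ((A - C*r₀^2)/(D*r₀))
          - (4*A*C + D^2)/(8*C^2) *
              arcsin ((2*C^2*r₀^2 - (2*A*C + D^2))/(D*Real.sqrt (4*A*C + D^2)))
          + Real.sqrt (D^2*r₀^2 - (A - C*r₀^2)^2)/(4*C)) :=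
    intervalIntegral.integral_eq_sub_of_hasDeriv_right_of_le hr01.le hcontF hderivF hint
  rw [key]
  set w := Real.sqrt (4*t^2 - 1) with hwdef
  have hw2 : w^2 = 4*t^2 - 1 := Real.sq_sqrt h4t1.le
  have hw0 : 0 < w := Real.sqrt_pos.2 h4t1
  have hmem : (1 - 3*t^2)/(2*t^3) ∈ Set.Ioo (-1:ℝ) 1 := by
    constructor
    · rw [lt_div_iff₀ (by positivity : (0:ℝ) < 2*t^3)]
      nlinarith [mul_pos (pow_pos (show (0:ℝ) < 1 - t by linarith) 2)
        (show (0:ℝ) < 2*t + 1 by linarith)]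
    · rw [div_lt_one (by positivity : (0:ℝ) < 2*t^3)]
      nlinarith [mul_pos (show (0:ℝ) < 2*t - 1 by linarith)
        (pow_pos (show (0:ℝ) < t + 1 by linarith) 2)]
  rw [show (A - C*r₀^2)/(D*r₀) = 1 by
        rw [div_eq_one_iff_eq (mul_pos hDpos hr0pos).ne', hA, hC, hD, hr₀def]; field_simp; ring,
      Real.arccos_one,
      show (2*C^2*r₀^2 - (2*A*C + D^2))/(D*Real.sqrt (4*A*C + D^2)) = -1 by
        rw [hsKval, hA, hC, hD, hr₀def]; field_simp; ring,
      Real.arcsin_neg_one,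
      hQ0, Real.sqrt_zero,
      show D^2*1^2 - (A - C*1^2)^2 = ((1 - 2*t^2)*w)^2 by
        rw [hA, hC, hD]; linear_combination (-(1 - 2*t^2)^2) * hw2,
      Real.sqrt_sq (mul_nonneg h12t2.le hw0.le),
      show (A - C*1^2)/(D*1) = -(-1 + (4*t^2 - 1)/(2*(t^2)^2)) by
        rw [hA, hC, hD]; field_simp; ring,
      Real.arccos_neg,
      show (2*C^2*1^2 - (2*A*C + D^2))/(D*Real.sqrt (4*A*C + D^2))
          = -((1 - 3*t^2)/(2*t^3)) by
        rw [hsKval, hA, hC, hD]; field_simp; ring,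
      Real.arcsin_neg,
      Real.arcsin_eq_arctan hmem,
      show (1:ℝ) - ((1 - 3*t^2)/(2*t^3))^2 = ((1 - t^2)*w/(2*t^3))^2 by
        field_simp; linear_combination (-(1 - t^2)^2) * hw2,
      Real.sqrt_sq (by positivity : (0:ℝ) ≤ (1 - t^2)*w/(2*t^3)),
      show (1 - 3*t^2)/(2*t^3) / ((1 - t^2)*w/(2*t^3)) = (1 - 3*t^2)/((1 - t^2)*w) by
        field_simp]
  rw [hA, hC, hD, hr₀def]
  have ht2m1 : t^2 - 1 ≠ 0 := by intro h; apply h1t2'; linarith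
  field_simp
  ring
end
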